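/- Let W ⊆ T(ℝ^d) and suppose the path variety 𝒱(W) is closed under concatenation: X, Y ∈ 𝒱(W) implies X ⊔ Y ∈ 𝒱(W). Then 𝒱(W) is closed under time reversal: X ∈ 𝒱(W) implies ⟵X ∈ 𝒱(W). (Every algebraic subsemigroup of paths under concatenation is an algebraic subgroup.) -/

import Mathlib

open scoped BigOperators TensorProduct

namespace PathVarieties

/-- Words over an alphabet `α`; the letters `{1,…,d}` of `ℝ^d` correspond to `α = Fin d`. -/
abbrev Word (α : Type*) := List α

/-- The tensor algebra `T(ℝ^d)`, identified with the free real vector space on words. -/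
abbrev TA (α : Type*) := Word α →₀ ℝ

/-- The list of all (riffle) shuffles of two words. -/
def shuffles {α : Type*} : Word α → Word α → List (Word α)
  | [], v => [v]
  | a :: u, [] => [a :: u]
  | a :: u, b :: v =>
      ((shuffles u (b :: v)).map (a :: ·)) ++ ((shuffles (a :: u) v).map (b :: ·))
termination_by u v => u.length + v.length
decreasing_by all_goals (simp only [List.length_cons]; omega)

/-- Shuffle product of two words, as an element of `T(ℝ^d)`. -/
noncomputable def shw {α : Type*} (u v : Word α) : TA α :=
  ((shuffles u v).map fun w => Finsupp.single w (1 : ℝ)).sum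

/-- The shuffle product `⧢` on `T(ℝ^d)`, the bilinear extension of the shuffle of words. -/
noncomputable def sh {α : Type*} (x y : TA α) : TA α :=
  x.sum fun u cu => y.sum fun v cv => (cu * cv) • shw u v

/-- Right halfshuffle `u ≻ v` of words (`v` nonempty): shuffle `u` with `v` minus its
last letter, then append the last letter of `v`.  (This is the unique bilinear operation
with `w ≻ a = wa` and `w ≻ (va) = (w≻v + v≻w)a`.) -/
noncomputable def rshw {α : Type*} (u v : Word α) : TA α :=
  ((shuffles u v.dropLast).map fun w =>
    Finsupp.single (w ++ v.drop (v.length - 1)) (1 : ℝ)).sum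

/-- Right halfshuffle `≻` on `T^{≥1}(ℝ^d)`, extended bilinearly. -/
noncomputable def rsh {α : Type*} (x y : TA α) : TA α :=
  x.sum fun u cu => y.sum fun v cv => (cu * cv) • rshw u v

/-- Left halfshuffle `u ≺ v` of words (`u` nonempty): the first letter of `u` followed by
the shuffle of the rest of `u` with `v`.  (This is the unique bilinear operation with
`a ≺ w = aw` and `(av) ≺ w = a(w≺v + v≺w)`.) -/
noncomputable def lshw {α : Type*} (u v : Word α) : TA α :=
  ((shuffles u.tail v).map fun w => Finsupp.single (u.take 1 ++ w) (1 : ℝ)).sum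

/-- Left halfshuffle `≺` on `T^{≥1}(ℝ^d)`, extended bilinearly. -/
noncomputable def lsh {α : Type*} (x y : TA α) : TA α :=
  x.sum fun u cu => y.sum fun v cv => (cu * cv) • lshw u v

/-- The antipode `𝒜`, with `𝒜(i₁⋯iₙ) = (−1)ⁿ iₙ⋯i₁`. -/
noncomputable def antipode {α : Type*} (x : TA α) : TA α :=
  x.sum fun w c => Finsupp.single w.reverse (((-1 : ℝ) ^ w.length) * c)

/-- Helper for `Λ_B`: value on a reversed word. -/
noncomputable def lamRev {α β : Type*} (B : α → TA β) : Word α → TA β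
  | [] => Finsupp.single [] 1
  | [i] => B i
  | i :: w => rsh (lamRev B w) (B i)

/-- `Λ_B` on a word: `Λ_B e = e`, `Λ_B i = B i`, `Λ_B (w·i) = (Λ_B w) ≻ (Λ_B i)`. -/
noncomputable def lamW {α β : Type*} (B : α → TA β) (w : Word α) : TA β :=
  lamRev B w.reverse

/-- The linear map `Λ_B : T(ℝ^t) → T(ℝ^d)` induced by `B` on letters. -/
noncomputable def Lam {α β : Type*} (B : α → TA β) (x : TA α) : TA β :=
  x.sum fun w c => c • lamW B w

/-- `splitEmb e j n w = Σ_{w = u₁⋯uₙ} e_j(u₁) ⧢ e_{j+1}(u₂) ⧢ ⋯ ⧢ e_{j+n−1}(uₙ)`,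
the sum over all splittings of `w` into `n` consecutive (possibly empty) factors,
each factor relabelled letterwise by `e`. -/
noncomputable def splitEmb {α β : Type*} (e : ℕ → α → β) : ℕ → ℕ → Word α → TA β
  | _, 0, w => if w.isEmpty then Finsupp.single ([] : Word β) (1 : ℝ) else 0
  | j, k + 1, w => ∑ m ∈ Finset.range (w.length + 1),
      sh (Finsupp.single ((w.take m).map (e j)) (1 : ℝ)) (splitEmb e (j + 1) k (w.drop m))

/-- `Σ_{x=uv} f(u)·v`: deconcatenate, evaluate the functional `f` on prefixes. -/
noncomputable def leftAct {α : Type*} (f : Word α → ℝ) (x : TA α) : TA α :=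
  x.sum fun w c => c • ∑ k ∈ Finset.range (w.length + 1),
    f (w.take k) • Finsupp.single (w.drop k) (1 : ℝ)

/-- `Σ_{x=uv} u·f(v)`: deconcatenate, evaluate the functional `f` on suffixes. -/
noncomputable def rightAct {α : Type*} (f : Word α → ℝ) (x : TA α) : TA α :=
  x.sum fun w c => c • ∑ k ∈ Finset.range (w.length + 1),
    f (w.drop k) • Finsupp.single (w.take k) (1 : ℝ)

/-- A raw path: a time horizon `T` together with a map `ℝ → ℝ^α`
(only the restriction to `[0,T]` is relevant). -/
structure RawPath (α : Type*) where
  T : ℝ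
  toFun : ℝ → α → ℝ

/-- A path: positive time horizon, continuous on `[0,T]` and piecewise continuously
differentiable there (witnessed by a partition `0 = τ₀ < τ₁ < ⋯ < τₙ = T`). -/
def IsPath {α : Type*} (X : RawPath α) : Prop :=
  0 < X.T ∧ (∀ i, ContinuousOn (fun t => X.toFun t i) (Set.Icc 0 X.T)) ∧
    ∃ (n : ℕ) (τ : Fin (n + 1) → ℝ), StrictMono τ ∧ τ 0 = 0 ∧ τ (Fin.last n) = X.T ∧
      ∀ (k : Fin n) (i : α), ContDiffOn ℝ 1 (fun t => X.toFun t i)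
        (Set.Icc (τ k.castSucc) (τ k.succ))

/-- Iterated integrals, by recursion on the reversed word:
`sigRev X (i :: w) t = ∫₀ᵗ ⟨σ(X)ₛ, w.reverse⟩ dX⁽ⁱ⁾(s)`. -/
noncomputable def sigRev {α : Type*} (X : ℝ → α → ℝ) : Word α → ℝ → ℝ
  | [], _ => 1
  | i :: w, t => ∫ s in (0 : ℝ)..t, sigRev X w s * deriv (fun u => X u i) s

/-- `⟨σ(X)_t, w⟩`, the iterated-integrals signature of `X` stopped at time `t`. -/
noncomputable def sigUpTo {α : Type*} (X : RawPath α) (t : ℝ) (w : Word α) : ℝ :=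
  sigRev X.toFun w.reverse t

/-- `⟨σ(X), w⟩`, the iterated-integrals signature of the path `X` at a word `w`. -/
noncomputable def sig {α : Type*} (X : RawPath α) (w : Word α) : ℝ :=
  sigUpTo X X.T w

/-- Pairing of a word-indexed functional with an element of `T(ℝ^d)`. -/
noncomputable def pairF {α : Type*} (f : Word α → ℝ) (x : TA α) : ℝ :=
  x.sum fun w c => c * f w

/-- `⟨σ(X), x⟩` for a tensor `x ∈ T(ℝ^d)` (linear in `x`). -/
noncomputable def pair {α : Type*} (X : RawPath α) (x : TA α) : ℝ :=
  Finsupp.linearCombination ℝ (sig X) x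

/-- The path variety `𝒱(W)` of all paths whose signature kills every element of `W`. -/
def V {α : Type*} (W : Set (TA α)) : Set (RawPath α) :=
  {X | IsPath X ∧ ∀ x ∈ W, pair X x = 0}

/-- `ℐ(M)`, the space of tensors killed by the signature of every path in `M`. -/
noncomputable def Idl {α : Type*} (M : Set (RawPath α)) : Submodule ℝ (TA α) :=
  ⨅ X ∈ M, LinearMap.ker (Finsupp.linearCombination ℝ (sig X))

/-- Concatenation `X ⊔ Y` of paths. -/
noncomputable def concat {α : Type*} (X Y : RawPath α) : RawPath α where
  T := X.T + Y.T
  toFun := fun t i =>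
    if t ≤ X.T then X.toFun t i else Y.toFun (t - X.T) i + X.toFun X.T i - Y.toFun 0 i

/-- Time reversal `⟵X`. -/
def timeRev {α : Type*} (X : RawPath α) : RawPath α :=
  ⟨X.T, fun t i => X.toFun (X.T - t) i⟩

/-- `concatIter X n = X^{⊔(n+1)}`. -/
noncomputable def concatIter {α : Type*} (X : RawPath α) : ℕ → RawPath α
  | 0 => X
  | n + 1 => concat (concatIter X n) X

/-- `X^{⊔n}`, the `n`-fold concatenation of `X` with itself (intended for `n ≥ 1`). -/
noncomputable def concatPow {α : Type*} (X : RawPath α) (n : ℕ) : RawPath α :=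
  concatIter X (n - 1)

/-- `concatFold f k = f 0 ⊔ f 1 ⊔ ⋯ ⊔ f k`. -/
noncomputable def concatFold {α : Type*} (f : ℕ → RawPath α) : ℕ → RawPath α
  | 0 => f 0
  | k + 1 => concat (concatFold f k) (f (k + 1))

/-- The deconcatenation coproduct `Δ : T(ℝ^d) → T(ℝ^d) ⊗ T(ℝ^d)`,
`Δw = Σ_{w=uv} u ⊗ v`. -/
noncomputable def deconc {α : Type*} (x : TA α) : TensorProduct ℝ (TA α) (TA α) :=
  x.sum fun w c => c • ∑ k ∈ Finset.range (w.length + 1),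
    (Finsupp.single (w.take k) (1 : ℝ)) ⊗ₜ[ℝ] (Finsupp.single (w.drop k) (1 : ℝ))


open Set MeasureTheory intervalIntegral Topology Filter

variable {α : Type*}

/-- A partition witnessing piecewise `C¹`-ness of `F` on `[0,T]`. -/
structure Pieces (F : ℝ → α → ℝ) (T : ℝ) where
  n : ℕ
  τ : Fin (n + 1) → ℝ
  mono : StrictMono τ
  t0 : τ 0 = 0
  tlast : τ (Fin.last n) = T
  smooth : ∀ (k : Fin n) (i : α), ContDiffOn ℝ 1 (fun t => F t i)
      (Icc (τ k.castSucc) (τ k.succ))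

namespace Pieces

variable {F : ℝ → α → ℝ} {T : ℝ}

lemma tau_nonneg (P : Pieces F T) (j : Fin (P.n + 1)) : 0 ≤ P.τ j := by
  rw [← P.t0]; exact P.mono.monotone (Fin.zero_le _)

lemma tau_le (P : Pieces F T) (j : Fin (P.n + 1)) : P.τ j ≤ T :=
  le_of_le_of_eq (P.mono.monotone (Fin.le_last _)) P.tlast

lemma T_nonneg (P : Pieces F T) : 0 ≤ T :=
  le_trans (P.tau_nonneg 0) (P.tau_le 0)

lemma lt (P : Pieces F T) (k : Fin P.n) : P.τ k.castSucc < P.τ k.succ :=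
  P.mono (Fin.castSucc_lt_succ (i := k))

lemma piece_subset (P : Pieces F T) (k : Fin P.n) :
    Icc (P.τ k.castSucc) (P.τ k.succ) ⊆ Icc 0 T :=
  Icc_subset_Icc (P.tau_nonneg _) (P.tau_le _)

lemma ioo_subset (P : Pieces F T) (k : Fin P.n) :
    Ioo (P.τ k.castSucc) (P.τ k.succ) ⊆ Ioo 0 T :=
  Ioo_subset_Ioo (P.tau_nonneg _) (P.tau_le _)

/-- Integrands that agree with a continuous function in the interior of each piece. -/
def Nice (P : Pieces F T) (h : ℝ → ℝ) : Prop :=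
  ∀ k : Fin P.n, ∃ g : ℝ → ℝ, Continuous g ∧
    ∀ x ∈ Ioo (P.τ k.castSucc) (P.τ k.succ), h x = g x

lemma nice_deriv (P : Pieces F T) (i : α) :
    P.Nice fun s => deriv (fun u => F u i) s := by
  intro k
  have hab : P.τ k.castSucc < P.τ k.succ := P.lt k
  have hD : ContinuousOn (derivWithin (fun u => F u i) (Icc (P.τ k.castSucc) (P.τ k.succ)))
      (Icc (P.τ k.castSucc) (P.τ k.succ)) :=
    (P.smooth k i).continuousOn_derivWithin (uniqueDiffOn_Icc hab) le_rfl
  refine ⟨IccExtend hab.le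
      ((Icc (P.τ k.castSucc) (P.τ k.succ)).restrict
        (derivWithin (fun u => F u i) (Icc (P.τ k.castSucc) (P.τ k.succ)))), ?_, ?_⟩
  · exact (continuousOn_iff_continuous_restrict.1 hD).Icc_extend'
  · intro x hx
    rw [IccExtend_of_mem _ _ (Ioo_subset_Icc_self hx)]
    exact (derivWithin_of_mem_nhds (Icc_mem_nhds hx.1 hx.2)).symm

lemma nice_mul_left (P : Pieces F T) {h : ℝ → ℝ} (hh : P.Nice h) {f : ℝ → ℝ}
    (hf : ContinuousOn f (Icc 0 T)) : P.Nice fun s => f s * h s := by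
  intro k
  obtain ⟨g, hg, hgeq⟩ := hh k
  refine ⟨fun s => IccExtend P.T_nonneg ((Icc (0:ℝ) T).restrict f) s * g s,
    ((continuousOn_iff_continuous_restrict.1 hf).Icc_extend').mul hg, ?_⟩
  intro x hx
  simp only [hgeq x hx, IccExtend_of_mem _ _ (P.piece_subset k (Ioo_subset_Icc_self hx))]
  rfl

lemma nice_piece_II (P : Pieces F T) {h : ℝ → ℝ} (hh : P.Nice h) (k : Fin P.n) :
    IntervalIntegrable h volume (P.τ k.castSucc) (P.τ k.succ) := by
  obtain ⟨g, hg, hgeq⟩ := hh k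
  refine (hg.intervalIntegrable _ _).congr_ae ?_
  rw [Filter.EventuallyEq, ae_restrict_iff' measurableSet_uIoc, MeasureTheory.ae_iff]
  refine measure_mono_null (fun x hx' => ?_) (measure_singleton (P.τ k.succ))
  rw [mem_setOf_eq, Classical.not_imp] at hx'
  obtain ⟨hmem, hne⟩ := hx'
  rw [uIoc_of_le (P.lt k).le] at hmem
  by_contra hxb
  exact hne (hgeq x ⟨hmem.1, lt_of_le_of_ne hmem.2 hxb⟩).symm

lemma nice_II_to (P : Pieces F T) {h : ℝ → ℝ} (hh : P.Nice h) :
    ∀ m : ℕ, ∀ hm : m < P.n + 1, IntervalIntegrable h volume 0 (P.τ ⟨m, hm⟩)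
  | 0, hm => by
      have h00 : (⟨0, hm⟩ : Fin (P.n + 1)) = 0 := by ext; simp
      rw [h00, P.t0, intervalIntegrable_iff]
      simp
  | m + 1, hm => by
      have hm' : m < P.n := Nat.lt_of_succ_lt_succ hm
      have h1 := nice_II_to P hh m (Nat.lt_succ_of_lt hm')
      have h2 := nice_piece_II P hh ⟨m, hm'⟩
      have e1 : (⟨m, hm'⟩ : Fin P.n).castSucc = ⟨m, Nat.lt_succ_of_lt hm'⟩ := rfl
      have e2 : (⟨m, hm'⟩ : Fin P.n).succ = ⟨m + 1, hm⟩ := rfl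
      rw [e1, e2] at h2
      exact h1.trans h2

lemma nice_II (P : Pieces F T) {h : ℝ → ℝ} (hh : P.Nice h) {a b : ℝ}
    (ha : a ∈ Icc 0 T) (hb : b ∈ Icc 0 T) : IntervalIntegrable h volume a b := by
  have h0T : IntervalIntegrable h volume 0 T := by
    have h3 := nice_II_to P hh P.n (Nat.lt_succ_self _)
    have e : (⟨P.n, Nat.lt_succ_self _⟩ : Fin (P.n + 1)) = Fin.last P.n := rfl
    rwa [e, P.tlast] at h3
  refine h0T.mono_set ?_
  rw [uIcc_of_le P.T_nonneg]
  exact uIcc_subset_Icc ha hb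

lemma nice_primitive_contOn (P : Pieces F T) {h : ℝ → ℝ} (hh : P.Nice h) :
    ContinuousOn (fun t => ∫ s in (0:ℝ)..t, h s) (Icc 0 T) := by
  have h4 := intervalIntegral.continuousOn_primitive_interval'
    (nice_II P hh (left_mem_Icc.2 P.T_nonneg) (right_mem_Icc.2 P.T_nonneg))
    left_mem_uIcc
  rwa [uIcc_of_le P.T_nonneg] at h4

lemma nice_primitive_hasDerivAt (P : Pieces F T) {h : ℝ → ℝ} (hh : P.Nice h)
    {k : Fin P.n} {x : ℝ} (hx : x ∈ Ioo (P.τ k.castSucc) (P.τ k.succ)) :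
    HasDerivAt (fun t => ∫ s in (0:ℝ)..t, h s) (h x) x := by
  obtain ⟨g, hg, hgeq⟩ := hh k
  have hxI : x ∈ Icc 0 T := P.piece_subset k (Ioo_subset_Icc_self hx)
  have hnb : Ioo (P.τ k.castSucc) (P.τ k.succ) ∈ 𝓝 x := Ioo_mem_nhds hx.1 hx.2
  refine intervalIntegral.integral_hasDerivAt_right
    (nice_II P hh (left_mem_Icc.2 P.T_nonneg) hxI)
    ⟨_, hnb, hg.aestronglyMeasurable.congr ?_⟩ ?_
  · exact (ae_restrict_iff' measurableSet_Ioo).2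
      (Filter.Eventually.of_forall fun y hy => (hgeq y hy).symm)
  · exact hg.continuousAt.congr (Filter.eventuallyEq_of_mem hnb hgeq).symm

lemma piecewise_const (P : Pieces F T) {φ : ℝ → ℝ} (hc : ContinuousOn φ (Icc 0 T))
    (hd : ∀ (k : Fin P.n), ∀ x ∈ Ioo (P.τ k.castSucc) (P.τ k.succ), HasDerivAt φ 0 x) :
    φ T = φ 0 := by
  have piece : ∀ k : Fin P.n, φ (P.τ k.succ) = φ (P.τ k.castSucc) := by
    intro k
    have h0 : ∫ _ in (P.τ k.castSucc)..(P.τ k.succ), (0:ℝ) =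
        φ (P.τ k.succ) - φ (P.τ k.castSucc) :=
      intervalIntegral.integral_eq_sub_of_hasDeriv_right_of_le (P.lt k).le
        (hc.mono (P.piece_subset k))
        (fun x hx => (hd k x hx).hasDerivWithinAt)
        intervalIntegrable_const
    rw [intervalIntegral.integral_zero] at h0
    linarith
  have key : ∀ m : ℕ, ∀ hm : m < P.n + 1, φ (P.τ ⟨m, hm⟩) = φ (P.τ 0) := by
    intro m
    induction m with
    | zero =>
      intro hm
      have h00 : (⟨0, hm⟩ : Fin (P.n + 1)) = 0 := by ext; simp
      rw [h00]
    | succ m ih =>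
      intro hm
      have hm' : m < P.n := Nat.lt_of_succ_lt_succ hm
      have hp := piece ⟨m, hm'⟩
      have e1 : (⟨m, hm'⟩ : Fin P.n).castSucc = ⟨m, Nat.lt_succ_of_lt hm'⟩ := rfl
      have e2 : (⟨m, hm'⟩ : Fin P.n).succ = ⟨m + 1, hm⟩ := rfl
      rw [e1, e2] at hp
      rw [hp]
      exact ih (Nat.lt_succ_of_lt hm')
  have hk := key P.n (Nat.lt_succ_self _)
  have e : (⟨P.n, Nat.lt_succ_self _⟩ : Fin (P.n + 1)) = Fin.last P.n := rfl
  rw [e, P.tlast, P.t0] at hk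
  exact hk

end Pieces
section SigMachine

variable {F : ℝ → α → ℝ} {T : ℝ}

lemma sigRev_nil (F : ℝ → α → ℝ) (t : ℝ) : sigRev F [] t = 1 := rfl

lemma sigRev_cons (F : ℝ → α → ℝ) (i : α) (l : List α) (t : ℝ) :
    sigRev F (i :: l) t = ∫ s in (0:ℝ)..t, sigRev F l s * deriv (fun u => F u i) s := rfl

lemma sigRev_cons_zero (F : ℝ → α → ℝ) (i : α) (l : List α) : sigRev F (i :: l) 0 = 0 := by
  rw [sigRev_cons]; exact intervalIntegral.integral_same

/-- Iterated integrals anchored at the right endpoint `T`, head letter = smallest time. -/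
noncomputable def sigK (F : ℝ → α → ℝ) (T : ℝ) : Word α → ℝ → ℝ
  | [], _ => 1
  | i :: l, t => ∫ s in t..T, sigK F T l s * deriv (fun u => F u i) s

lemma sigK_nil (F : ℝ → α → ℝ) (T t : ℝ) : sigK F T [] t = 1 := rfl

lemma sigK_cons (F : ℝ → α → ℝ) (T : ℝ) (i : α) (l : List α) (t : ℝ) :
    sigK F T (i :: l) t = ∫ s in t..T, sigK F T l s * deriv (fun u => F u i) s := rfl

lemma sigK_cons_T (F : ℝ → α → ℝ) (T : ℝ) (i : α) (l : List α) : sigK F T (i :: l) T = 0 := by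
  rw [sigK_cons]; exact intervalIntegral.integral_same

lemma sigRev_contOn (P : Pieces F T) : ∀ l : List α, ContinuousOn (sigRev F l) (Icc 0 T)
  | [] => by
      rw [show sigRev F ([] : List α) = fun _ => (1:ℝ) from rfl]
      exact continuousOn_const
  | i :: l => by
      rw [show sigRev F (i :: l) =
        fun t => ∫ s in (0:ℝ)..t, sigRev F l s * deriv (fun u => F u i) s from rfl]
      exact Pieces.nice_primitive_contOn P
        (Pieces.nice_mul_left P (Pieces.nice_deriv P i) (sigRev_contOn P l))

lemma sigRev_nice (P : Pieces F T) (l : List α) (i : α) :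
    P.Nice fun s => sigRev F l s * deriv (fun u => F u i) s :=
  Pieces.nice_mul_left P (Pieces.nice_deriv P i) (sigRev_contOn P l)

lemma sigRev_hasDerivAt (P : Pieces F T) (l : List α) (i : α) {k : Fin P.n} {x : ℝ}
    (hx : x ∈ Ioo (P.τ k.castSucc) (P.τ k.succ)) :
    HasDerivAt (sigRev F (i :: l)) (sigRev F l x * deriv (fun u => F u i) x) x := by
  rw [show sigRev F (i :: l) =
    fun t => ∫ s in (0:ℝ)..t, sigRev F l s * deriv (fun u => F u i) s from rfl]
  exact Pieces.nice_primitive_hasDerivAt P (sigRev_nice P l i) hx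

lemma sigK_contOn (P : Pieces F T) : ∀ l : List α, ContinuousOn (sigK F T l) (Icc 0 T)
  | [] => by
      rw [show sigK F T ([] : List α) = fun _ => (1:ℝ) from rfl]
      exact continuousOn_const
  | i :: l => by
      have hn : P.Nice fun s => sigK F T l s * deriv (fun u => F u i) s :=
        Pieces.nice_mul_left P (Pieces.nice_deriv P i) (sigK_contOn P l)
      refine ContinuousOn.congr
        (f := fun t => (∫ s in (0:ℝ)..T, sigK F T l s * deriv (fun u => F u i) s)
          - ∫ s in (0:ℝ)..t, sigK F T l s * deriv (fun u => F u i) s)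
        (continuousOn_const.sub (Pieces.nice_primitive_contOn P hn)) ?_
      intro t ht
      exact (intervalIntegral.integral_interval_sub_left
        (Pieces.nice_II P hn (left_mem_Icc.2 P.T_nonneg) (right_mem_Icc.2 P.T_nonneg))
        (Pieces.nice_II P hn (left_mem_Icc.2 P.T_nonneg) ht)).symm

lemma sigK_nice (P : Pieces F T) (l : List α) (i : α) :
    P.Nice fun s => sigK F T l s * deriv (fun u => F u i) s :=
  Pieces.nice_mul_left P (Pieces.nice_deriv P i) (sigK_contOn P l)

lemma sigK_hasDerivAt (P : Pieces F T) (l : List α) (i : α) {k : Fin P.n} {x : ℝ}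
    (hx : x ∈ Ioo (P.τ k.castSucc) (P.τ k.succ)) :
    HasDerivAt (sigK F T (i :: l)) (-(sigK F T l x * deriv (fun u => F u i) x)) x := by
  have hn : P.Nice fun s => sigK F T l s * deriv (fun u => F u i) s := sigK_nice P l i
  have hd : HasDerivAt
      (fun t => (∫ s in (0:ℝ)..T, sigK F T l s * deriv (fun u => F u i) s)
        - ∫ s in (0:ℝ)..t, sigK F T l s * deriv (fun u => F u i) s)
      (-(sigK F T l x * deriv (fun u => F u i) x)) x := by
    refine HasDerivAt.congr_deriv ((hasDerivAt_const x
      (∫ s in (0:ℝ)..T, sigK F T l s * deriv (fun u => F u i) s)).sub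
      (Pieces.nice_primitive_hasDerivAt P hn hx)) (zero_sub _)
  refine hd.congr_of_eventuallyEq ?_
  have hmem : Ioo (0:ℝ) T ∈ 𝓝 x := isOpen_Ioo.mem_nhds (P.ioo_subset k hx)
  filter_upwards [hmem] with t ht
  exact (intervalIntegral.integral_interval_sub_left
    (Pieces.nice_II P hn (left_mem_Icc.2 P.T_nonneg) (right_mem_Icc.2 P.T_nonneg))
    (Pieces.nice_II P hn (left_mem_Icc.2 P.T_nonneg) (Ioo_subset_Icc_self ht))).symm

lemma take_reverse_succ (w : List α) (j : ℕ) (hj : j < w.length) :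
    (w.take (j+1)).reverse = (w[j]'hj) :: (w.take j).reverse := by
  rw [List.take_succ]
  simp [List.getElem?_eq_getElem hj]

lemma hasDerivAt_take (P : Pieces F T) (w : List α) {kp : Fin P.n} {x : ℝ}
    (hx : x ∈ Ioo (P.τ kp.castSucc) (P.τ kp.succ)) (j : ℕ) (hj : j < w.length) :
    HasDerivAt (fun t => sigRev F ((w.take (j+1)).reverse) t)
      (sigRev F ((w.take j).reverse) x * deriv (fun u => F u (w[j]'hj)) x) x := by
  rw [show (fun t => sigRev F ((w.take (j+1)).reverse) t)
      = sigRev F ((w.take (j+1)).reverse) from rfl, take_reverse_succ w j hj]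
  exact sigRev_hasDerivAt P _ _ hx

lemma hasDerivAt_dropR (P : Pieces F T) (w : List α) {kp : Fin P.n} {x : ℝ}
    (hx : x ∈ Ioo (P.τ kp.castSucc) (P.τ kp.succ)) (j : ℕ) (hj : j < w.length) :
    HasDerivAt (fun t => sigRev F (w.drop j) t)
      (sigRev F (w.drop (j+1)) x * deriv (fun u => F u (w[j]'hj)) x) x := by
  rw [show (fun t => sigRev F (w.drop j) t) = sigRev F (w.drop j) from rfl,
    List.drop_eq_getElem_cons hj]
  exact sigRev_hasDerivAt P _ _ hx

lemma hasDerivAt_dropK (P : Pieces F T) (w : List α) {kp : Fin P.n} {x : ℝ}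
    (hx : x ∈ Ioo (P.τ kp.castSucc) (P.τ kp.succ)) (j : ℕ) (hj : j < w.length) :
    HasDerivAt (fun t => sigK F T (w.drop j) t)
      (-(sigK F T (w.drop (j+1)) x * deriv (fun u => F u (w[j]'hj)) x)) x := by
  rw [show (fun t => sigK F T (w.drop j) t) = sigK F T (w.drop j) from rfl,
    List.drop_eq_getElem_cons hj]
  exact sigK_hasDerivAt P _ _ hx

end SigMachine
section Telescope

variable {F : ℝ → α → ℝ} {T : ℝ}

/-- Equality of the right-anchored and left-anchored iterated integrals. -/
lemma sigK_zero_eq (P : Pieces F T) (w : List α) :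
    sigK F T w 0 = sigRev F w.reverse T := by
  classical
  rcases List.eq_nil_or_concat w with rfl | hne
  · simp [sigK_nil, sigRev_nil]
  have hw : w ≠ [] := by rintro rfl; obtain ⟨_, _, h⟩ := hne; simp at h
  have hlen : 0 < w.length := List.length_pos_iff.2 hw
  set a0 : α := w[0]'hlen with ha0
  set φ : ℝ → ℝ := fun t => ∑ k ∈ Finset.range (w.length+1),
      sigRev F ((w.take k).reverse) t * sigK F T (w.drop k) t with hφ
  have hφc : ContinuousOn φ (Icc 0 T) :=
    continuousOn_finset_sum _ fun k _ => (sigRev_contOn P _).mul (sigK_contOn P _)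
  have hd : ∀ (kp : Fin P.n), ∀ x ∈ Ioo (P.τ kp.castSucc) (P.τ kp.succ),
      HasDerivAt φ 0 x := by
    intro kp x hx
    set v : ℕ → ℝ := fun j => if 1 ≤ j ∧ j ≤ w.length then
        sigRev F ((w.take (j-1)).reverse) x * deriv (fun u => F u (w.getD (j-1) a0)) x
          * sigK F T (w.drop j) x
      else 0 with hv
    have hterm : ∀ k ∈ Finset.range (w.length+1),
        HasDerivAt (fun t => sigRev F ((w.take k).reverse) t * sigK F T (w.drop k) t)
          (v k - v (k+1)) x := by
      intro k hk
      rw [Finset.mem_range, Nat.lt_succ_iff] at hk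
      match k, hk with
      | 0, hk =>
        have h1 : HasDerivAt (fun t => sigRev F ((w.take 0).reverse) t) 0 x := by
          simp only [List.take_zero, List.reverse_nil, sigRev_nil]
          exact hasDerivAt_const x 1
        have h2 := hasDerivAt_dropK P w hx 0 hlen
        have h3 := h1.mul h2
        refine h3.congr_deriv ?_
        simp only [hv]
        rw [if_neg (by omega), if_pos (by omega : 1 ≤ 1 ∧ 1 ≤ w.length)]
        simp only [show (1:ℕ)-1 = 0 from rfl, show (0:ℕ)+1 = 1 from rfl,
          List.getD_eq_getElem w a0 hlen, List.take_zero, List.reverse_nil, sigRev_nil,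
          List.drop_zero]
        ring
      | j + 1, hk =>
        have hj : j < w.length := by omega
        have h1 := hasDerivAt_take P w hx j hj
        have egd : w.getD j a0 = w[j]'hj := List.getD_eq_getElem w a0 hj
        by_cases hj2 : j + 1 < w.length
        · have h2 := hasDerivAt_dropK P w hx (j+1) hj2
          have h3 := h1.mul h2
          refine h3.congr_deriv ?_
          have egd2 : w.getD (j+1) a0 = w[j+1]'hj2 := List.getD_eq_getElem w a0 hj2
          simp only [hv]
          rw [if_pos (by omega : 1 ≤ j+1 ∧ j+1 ≤ w.length),
            if_pos (by omega : 1 ≤ j+1+1 ∧ j+1+1 ≤ w.length)]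
          simp only [Nat.add_sub_cancel, egd, egd2]
          ring
        · have hjn : j + 1 = w.length := by omega
          have h2 : HasDerivAt (fun t => sigK F T (w.drop (j+1)) t) 0 x := by
            rw [hjn, show (fun t => sigK F T (w.drop w.length) t) = fun _ => (1:ℝ) by
              funext t; rw [List.drop_length, sigK_nil]]
            exact hasDerivAt_const x 1
          have h3 := h1.mul h2
          refine h3.congr_deriv ?_
          simp only [hv]
          rw [if_pos (by omega : 1 ≤ j+1 ∧ j+1 ≤ w.length), if_neg (by omega)]
          simp only [Nat.add_sub_cancel, egd]
          ring
    have hsum := HasDerivAt.sum hterm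
    rw [Finset.sum_range_sub' v (w.length+1)] at hsum
    have hv0 : v 0 = 0 := by simp only [hv]; rw [if_neg (by omega)]
    have hvlast : v (w.length+1) = 0 := by simp only [hv]; rw [if_neg (by omega)]
    rw [hv0, hvlast, sub_self] at hsum
    rw [Finset.sum_fn] at hsum
    exact hsum
  have hconst := Pieces.piecewise_const P hφc hd
  have hT : φ T = sigRev F w.reverse T := by
    simp only [hφ]
    rw [Finset.sum_eq_single_of_mem w.length (Finset.self_mem_range_succ w.length)]
    · simp [List.take_length, List.drop_length, sigK_nil]
    · intro k hk hkne
      rw [Finset.mem_range, Nat.lt_succ_iff] at hk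
      have hklt : k < w.length := lt_of_le_of_ne hk hkne
      rw [List.drop_eq_getElem_cons hklt, sigK_cons_T, mul_zero]
  have h0 : φ 0 = sigK F T w 0 := by
    simp only [hφ]
    rw [Finset.sum_eq_single_of_mem 0 (Finset.mem_range.2 (by omega))]
    · simp [sigRev_nil]
    · intro k hk hkne
      rw [Finset.mem_range, Nat.lt_succ_iff] at hk
      match k, hk, hkne with
      | j + 1, hk, _ =>
        have hj : j < w.length := by omega
        rw [take_reverse_succ w j hj, sigRev_cons_zero, zero_mul]
  rw [← h0, ← hT, hconst]

/-- The time-reversal formula, relating `sigRev` of the reversed path to `sigK`. -/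
lemma sigRev_timeRev (P : Pieces F T) :
    ∀ (l : List α) (t : ℝ), _root_.id (t ∈ Icc 0 T) →
      sigRev (fun u j => F (T - u) j) l t = (-1:ℝ)^l.length * sigK F T l (T - t)
  | [], t, ht => by simp [sigRev_nil, sigK_nil]
  | i :: l, t, ht => by
      have ht' : t ∈ Icc 0 T := ht
      have key : Set.EqOn
          (fun s => sigRev (fun u j => F (T - u) j) l s *
            deriv (fun u => (fun u j => F (T - u) j) u i) s)
          (fun s => (-1:ℝ)^(l.length+1) *
            (sigK F T l (T-s) * deriv (fun u => F u i) (T-s))) (uIcc 0 t) := by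
        intro s hs
        rw [uIcc_of_le ht'.1] at hs
        have hs' : s ∈ Icc 0 T := ⟨hs.1, le_trans hs.2 ht'.2⟩
        have hrec := sigRev_timeRev P l s hs'
        have hder : deriv (fun u => (fun u j => F (T - u) j) u i) s
            = -deriv (fun u => F u i) (T - s) :=
          deriv_comp_const_sub (fun u => F u i) T s
        simp only [hrec, hder]
        ring
      rw [sigRev_cons, intervalIntegral.integral_congr key,
        intervalIntegral.integral_const_mul,
        intervalIntegral.integral_comp_sub_left
          (fun s => sigK F T l s * deriv (fun u => F u i) s) T]
      rw [sub_zero]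
      rw [sigK_cons, List.length_cons]

/-- The antipode identity: the signature convolved with its reversed-signature vanishes. -/
lemma antipode_sum_zero (P : Pieces F T) (w : List α) (hw : w ≠ []) :
    ∑ k ∈ Finset.range (w.length + 1),
      (-1:ℝ)^(w.length - k) *
        (sigRev F ((w.take k).reverse) T * sigRev F (w.drop k) T) = 0 := by
  classical
  have hlen : 0 < w.length := List.length_pos_iff.2 hw
  set a0 : α := w[0]'hlen with ha0
  set φ : ℝ → ℝ := fun t => ∑ k ∈ Finset.range (w.length+1),
      (-1:ℝ)^(w.length - k) *
        (sigRev F ((w.take k).reverse) t * sigRev F (w.drop k) t) with hφ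
  have hφc : ContinuousOn φ (Icc 0 T) :=
    continuousOn_finset_sum _ fun k _ =>
      (continuousOn_const.mul ((sigRev_contOn P _).mul (sigRev_contOn P _)))
  have hd : ∀ (kp : Fin P.n), ∀ x ∈ Ioo (P.τ kp.castSucc) (P.τ kp.succ),
      HasDerivAt φ 0 x := by
    intro kp x hx
    set v : ℕ → ℝ := fun j => if 1 ≤ j ∧ j ≤ w.length then
        (-1:ℝ)^(w.length - j) *
          (sigRev F ((w.take (j-1)).reverse) x * deriv (fun u => F u (w.getD (j-1) a0)) x
            * sigRev F (w.drop j) x)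
      else 0 with hv
    have hterm : ∀ k ∈ Finset.range (w.length+1),
        HasDerivAt (fun t => (-1:ℝ)^(w.length - k) *
          (sigRev F ((w.take k).reverse) t * sigRev F (w.drop k) t))
          (v k - v (k+1)) x := by
      intro k hk
      rw [Finset.mem_range, Nat.lt_succ_iff] at hk
      match k, hk with
      | 0, hk =>
        have h1 : HasDerivAt (fun t => sigRev F ((w.take 0).reverse) t) 0 x := by
          simp only [List.take_zero, List.reverse_nil, sigRev_nil]
          exact hasDerivAt_const x 1
        have h2 := hasDerivAt_dropR P w hx 0 hlen
        have h3 := (h1.mul h2).const_mul ((-1:ℝ)^(w.length - 0))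
        refine h3.congr_deriv ?_
        have hsgn : ((-1:ℝ))^(w.length - 0) = -(-1:ℝ)^(w.length - 1) := by
          rw [Nat.sub_zero]
          conv_lhs => rw [show w.length = (w.length - 1) + 1 by omega]
          rw [pow_succ]; ring
        simp only [hv]
        rw [if_neg (by omega), if_pos (by omega : 1 ≤ 1 ∧ 1 ≤ w.length)]
        simp only [show (1:ℕ)-1 = 0 from rfl, show (0:ℕ)+1 = 1 from rfl,
          List.getD_eq_getElem w a0 hlen, List.take_zero, List.reverse_nil, sigRev_nil,
          List.drop_zero]
        rw [hsgn]
        ring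
      | j + 1, hk =>
        have hj : j < w.length := by omega
        have h1 := hasDerivAt_take P w hx j hj
        have egd : w.getD j a0 = w[j]'hj := List.getD_eq_getElem w a0 hj
        by_cases hj2 : j + 1 < w.length
        · have h2 := hasDerivAt_dropR P w hx (j+1) hj2
          have h3 := (h1.mul h2).const_mul ((-1:ℝ)^(w.length - (j+1)))
          refine h3.congr_deriv ?_
          have egd2 : w.getD (j+1) a0 = w[j+1]'hj2 := List.getD_eq_getElem w a0 hj2
          have hsgn : ((-1:ℝ))^(w.length - (j+1)) = -(-1:ℝ)^(w.length - (j+1+1)) := by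
            conv_lhs => rw [show w.length - (j+1) = (w.length - (j+1+1)) + 1 by omega]
            rw [pow_succ]; ring
          simp only [hv]
          rw [if_pos (by omega : 1 ≤ j+1 ∧ j+1 ≤ w.length),
            if_pos (by omega : 1 ≤ j+1+1 ∧ j+1+1 ≤ w.length)]
          simp only [Nat.add_sub_cancel, egd, egd2]
          rw [hsgn]
          ring
        · have hjn : j + 1 = w.length := by omega
          have h2 : HasDerivAt (fun t => sigRev F (w.drop (j+1)) t) 0 x := by
            rw [hjn, show (fun t => sigRev F (w.drop w.length) t) = fun _ => (1:ℝ) by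
              funext t; rw [List.drop_length, sigRev_nil]]
            exact hasDerivAt_const x 1
          have h3 := (h1.mul h2).const_mul ((-1:ℝ)^(w.length - (j+1)))
          refine h3.congr_deriv ?_
          simp only [hv]
          rw [if_pos (by omega : 1 ≤ j+1 ∧ j+1 ≤ w.length), if_neg (by omega)]
          simp only [Nat.add_sub_cancel, egd]
          ring
    have hsum := HasDerivAt.sum hterm
    rw [Finset.sum_range_sub' v (w.length+1)] at hsum
    have hv0 : v 0 = 0 := by simp only [hv]; rw [if_neg (by omega)]
    have hvlast : v (w.length+1) = 0 := by simp only [hv]; rw [if_neg (by omega)]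
    rw [hv0, hvlast, sub_self] at hsum
    rw [Finset.sum_fn] at hsum
    exact hsum
  have hconst := Pieces.piecewise_const P hφc hd
  have h0 : φ 0 = 0 := by
    simp only [hφ]
    apply Finset.sum_eq_zero
    intro k hk
    rw [Finset.mem_range, Nat.lt_succ_iff] at hk
    match k, hk with
    | 0, hk =>
      obtain ⟨i, l', hwe⟩ := List.exists_cons_of_ne_nil hw
      have hz : sigRev F (w.drop 0) 0 = 0 := by
        rw [List.drop_zero, hwe]; exact sigRev_cons_zero F i l'
      rw [hz, mul_zero, mul_zero]
    | j + 1, hk =>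
      have hj : j < w.length := by omega
      rw [take_reverse_succ w j hj, sigRev_cons_zero, zero_mul, mul_zero]
  have hfin : φ T = 0 := hconst.trans h0
  simpa only [hφ] using hfin

end Telescope
section Chen

variable {X Y : RawPath α}

lemma concat_toFun_le {v : ℝ} (hv : v ≤ X.T) (i : α) :
    (concat X Y).toFun v i = X.toFun v i := if_pos hv

lemma concat_toFun_gt {v : ℝ} (hv : X.T < v) (i : α) :
    (concat X Y).toFun v i = Y.toFun (v - X.T) i + X.toFun X.T i - Y.toFun 0 i :=
  if_neg (not_le.2 hv)

lemma deriv_concat_lt {r : ℝ} (hr : r < X.T) (i : α) :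
    deriv (fun u => (concat X Y).toFun u i) r = deriv (fun u => X.toFun u i) r := by
  apply Filter.EventuallyEq.deriv_eq
  filter_upwards [Iio_mem_nhds hr] with v hv
  exact concat_toFun_le (le_of_lt hv) i

lemma deriv_concat_gt {u : ℝ} (hu : 0 < u) (i : α) :
    deriv (fun v => (concat X Y).toFun v i) (X.T + u) = deriv (fun v => Y.toFun v i) u := by
  have h1 : deriv (fun v => (concat X Y).toFun v i) (X.T + u)
      = deriv (fun v => Y.toFun (v - X.T) i + (X.toFun X.T i - Y.toFun 0 i)) (X.T + u) := by
    apply Filter.EventuallyEq.deriv_eq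
    filter_upwards [Ioi_mem_nhds (show X.T < X.T + u by linarith)] with v hv
    rw [concat_toFun_gt hv i]
    ring
  rw [h1, deriv_add_const]
  have h2 := deriv_comp_sub_const (fun z => Y.toFun z i) X.T (X.T + u)
  rw [add_sub_cancel_left] at h2
  exact h2

lemma sigRev_concat_left :
    ∀ (l : List α) (s : ℝ), s ∈ Icc 0 X.T →
      sigRev (concat X Y).toFun l s = sigRev X.toFun l s
  | [], _, _ => rfl
  | i :: l, s, hs => by
      rw [sigRev_cons, sigRev_cons]
      apply intervalIntegral.integral_congr_ae
      rw [MeasureTheory.ae_iff]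
      refine measure_mono_null (fun r hr => ?_) (measure_singleton X.T)
      rw [mem_setOf_eq, Classical.not_imp] at hr
      obtain ⟨hmem, hne⟩ := hr
      rw [uIoc_of_le hs.1] at hmem
      rw [mem_singleton_iff]
      by_contra hrT
      have hrle : r ≤ X.T := le_trans hmem.2 hs.2
      have hrlt : r < X.T := lt_of_le_of_ne hrle hrT
      refine hne ?_
      rw [sigRev_concat_left l r ⟨le_of_lt hmem.1, hrle⟩, deriv_concat_lt hrlt i]

lemma sigRev_concat (PX : Pieces X.toFun X.T) (PY : Pieces Y.toFun Y.T)
    (PZ : Pieces (concat X Y).toFun (X.T + Y.T)) :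
    ∀ (l : List α) (t : ℝ), t ∈ Icc 0 Y.T →
      sigRev (concat X Y).toFun l (X.T + t) =
        ∑ k ∈ Finset.range (l.length + 1),
          sigRev Y.toFun (l.take k) t * sigRev X.toFun (l.drop k) X.T
  | [], t, ht => by simp [sigRev_nil]
  | i :: l, t, ht => by
      have hXT : (0:ℝ) ≤ X.T := PX.T_nonneg
      have hYT : (0:ℝ) ≤ Y.T := PY.T_nonneg
      have hXmem : X.T ∈ Icc (0:ℝ) (X.T + Y.T) := ⟨hXT, by linarith⟩
      have hXtmem : X.T + t ∈ Icc (0:ℝ) (X.T + Y.T) :=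
        ⟨by linarith [ht.1], by linarith [ht.2]⟩
      have h0mem : (0:ℝ) ∈ Icc (0:ℝ) (X.T + Y.T) := left_mem_Icc.2 (by linarith)
      have hni := sigRev_nice PZ l i
      rw [sigRev_cons]
      rw [← intervalIntegral.integral_add_adjacent_intervals
        (Pieces.nice_II PZ hni h0mem hXmem) (Pieces.nice_II PZ hni hXmem hXtmem)]
      have hfirst : (∫ s in (0:ℝ)..X.T, sigRev (concat X Y).toFun l s *
          deriv (fun u => (concat X Y).toFun u i) s) = sigRev X.toFun (i :: l) X.T := by
        rw [← sigRev_cons]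
        exact sigRev_concat_left (i :: l) X.T (right_mem_Icc.2 hXT)
      have hsecond : (∫ s in X.T..(X.T + t), sigRev (concat X Y).toFun l s *
          deriv (fun u => (concat X Y).toFun u i) s)
          = ∑ k ∈ Finset.range (l.length + 1),
              sigRev Y.toFun (i :: l.take k) t * sigRev X.toFun (l.drop k) X.T := by
        have hcomp : (∫ s in X.T..(X.T + t), sigRev (concat X Y).toFun l s *
            deriv (fun u => (concat X Y).toFun u i) s)
            = ∫ u in (0:ℝ)..t, sigRev (concat X Y).toFun l (X.T + u) *
                deriv (fun v => (concat X Y).toFun v i) (X.T + u) := by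
          rw [intervalIntegral.integral_comp_add_left
            (fun s => sigRev (concat X Y).toFun l s *
              deriv (fun v => (concat X Y).toFun v i) s) X.T]
          norm_num
        rw [hcomp]
        have hcongr : (∫ u in (0:ℝ)..t, sigRev (concat X Y).toFun l (X.T + u) *
              deriv (fun v => (concat X Y).toFun v i) (X.T + u))
            = ∫ u in (0:ℝ)..t, ∑ k ∈ Finset.range (l.length + 1),
                (sigRev Y.toFun (l.take k) u * deriv (fun v => Y.toFun v i) u) *
                  sigRev X.toFun (l.drop k) X.T := by
          apply intervalIntegral.integral_congr_ae
          refine Filter.Eventually.of_forall fun u hu => ?_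
          rw [uIoc_of_le ht.1] at hu
          rw [sigRev_concat PX PY PZ l u ⟨le_of_lt hu.1, le_trans hu.2 ht.2⟩,
            deriv_concat_gt hu.1 i, Finset.sum_mul]
          exact Finset.sum_congr rfl fun k _ => by ring
        rw [hcongr, intervalIntegral.integral_finset_sum]
        · apply Finset.sum_congr rfl
          intro k _
          rw [intervalIntegral.integral_mul_const, ← sigRev_cons]
        · intro k _
          exact (Pieces.nice_II PY (sigRev_nice PY (l.take k) i)
            (left_mem_Icc.2 hYT) ht).mul_const _
      rw [hfirst, hsecond]
      simp only [List.length_cons]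
      rw [Finset.sum_range_succ' (fun k => sigRev Y.toFun ((i :: l).take k) t *
        sigRev X.toFun ((i :: l).drop k) X.T) (l.length + 1)]
      simp only [List.take_succ_cons, List.drop_succ_cons, List.take_zero, List.drop_zero,
        sigRev_nil, one_mul]
      exact add_comm _ _

lemma sig_rfl (X : RawPath α) (w : List α) :
    sig X w = sigRev X.toFun w.reverse X.T := rfl

lemma sig_concat (PX : Pieces X.toFun X.T) (PY : Pieces Y.toFun Y.T)
    (PZ : Pieces (concat X Y).toFun (X.T + Y.T)) (w : List α) :
    sig (concat X Y) w = ∑ j ∈ Finset.range (w.length + 1),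
      sig X (w.take j) * sig Y (w.drop j) := by
  have h := sigRev_concat PX PY PZ w.reverse Y.T (right_mem_Icc.2 PY.T_nonneg)
  rw [sig_rfl, show (concat X Y).T = X.T + Y.T from rfl, h, List.length_reverse]
  rw [← Finset.sum_range_reflect]
  apply Finset.sum_congr rfl
  intro j hj
  rw [Finset.mem_range, Nat.lt_succ_iff] at hj
  rw [show w.length + 1 - 1 - j = w.length - j from by omega]
  have e1 : w.reverse.drop (w.length - j) = (w.take j).reverse :=
    (List.reverse_take (l := w) (i := j)).symm
  have e2 : w.reverse.take (w.length - j) = (w.drop j).reverse := by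
    have h5 := List.reverse_take (l := w.reverse) (i := w.length - j)
    rw [List.reverse_reverse, List.length_reverse,
      show w.length - (w.length - j) = j from by omega] at h5
    rw [← h5, List.reverse_reverse]
  rw [e1, e2, sig_rfl, sig_rfl]
  exact mul_comm _ _

end Chen
section Paths

/-- Extract a `Pieces` structure from an `IsPath` witness. -/
noncomputable def pathPieces {X : RawPath α} (h : IsPath X) : Pieces X.toFun X.T :=
  ⟨h.2.2.choose, h.2.2.choose_spec.choose, h.2.2.choose_spec.choose_spec.1,
    h.2.2.choose_spec.choose_spec.2.1, h.2.2.choose_spec.choose_spec.2.2.1,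
    h.2.2.choose_spec.choose_spec.2.2.2⟩

lemma isPath_timeRev {X : RawPath α} (h : IsPath X) : IsPath (timeRev X) := by
  obtain ⟨hT, hcont, n, τ, hmono, h0, hlast, hsm⟩ := h
  refine ⟨hT, ?_, n, fun j => X.T - τ j.rev, ?_, ?_, ?_, ?_⟩
  · intro i
    have hc : ContinuousOn (fun t : ℝ => X.T - t) (Icc 0 X.T) :=
      (continuous_const.sub continuous_id).continuousOn
    refine ContinuousOn.comp (hcont i) hc ?_
    intro t ht
    simp only [mem_Icc] at ht ⊢
    rw [show (timeRev X).T = X.T from rfl] at ht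
    constructor <;> linarith [ht.1, ht.2]
  · intro a b hab
    have h1 : b.rev < a.rev := Fin.rev_lt_rev.mpr hab
    have h2 := hmono h1
    simp only
    linarith
  · simp [Fin.rev_zero, hlast]
  · simp only [Fin.rev_last, h0, sub_zero]
    rfl
  · intro k i
    have hk := hsm k.rev i
    have e1 : (k.castSucc : Fin (n+1)).rev = (k.rev).succ := Fin.rev_castSucc k
    have e2 : (k.succ : Fin (n+1)).rev = (k.rev).castSucc := Fin.rev_succ k
    simp only [e1, e2]
    have haff : ContDiffOn ℝ 1 (fun t : ℝ => X.T - t)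
        (Icc (X.T - τ k.rev.succ) (X.T - τ k.rev.castSucc)) :=
      (contDiff_const.sub contDiff_id).contDiffOn
    refine ContDiffOn.comp hk haff ?_
    intro t ht
    simp only [mem_Icc] at ht ⊢
    constructor <;> linarith [ht.1, ht.2]

lemma pair_eq (X : RawPath α) (x : TA α) :
    pair X x = ∑ w ∈ x.support, x w * sig X w := by
  rw [pair, Finsupp.linearCombination_apply, Finsupp.sum]
  simp [smul_eq_mul]

end Paths

section Convolution

variable [DecidableEq α]

/-- Convolution (deconcatenation pairing) of two word functionals. -/
noncomputable def cnv (f₁ f₂ : List α → ℝ) (w : List α) : ℝ :=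
  ∑ k ∈ Finset.range (w.length + 1), f₁ (w.take k) * f₂ (w.drop k)

/-- The counit functional. -/
noncomputable def deltaF : List α → ℝ := fun w => if w = [] then 1 else 0

/-- Sums over compositions into `k` nonempty blocks (peeling the first block). -/
noncomputable def Aalt (g : List α → ℝ) : ℕ → List α → ℝ
  | 0, w => if w = [] then 1 else 0
  | k + 1, w => ∑ j ∈ Finset.range w.length, g (w.take (j+1)) * Aalt g k (w.drop (j+1))

variable {g : List α → ℝ}

lemma Aalt_zero_def (g : List α → ℝ) (w : List α) :
    Aalt g 0 w = if w = [] then 1 else 0 := rfl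

lemma Aalt_succ_def (g : List α → ℝ) (k : ℕ) (w : List α) :
    Aalt g (k+1) w = ∑ j ∈ Finset.range w.length, g (w.take (j+1)) * Aalt g k (w.drop (j+1)) :=
  rfl

lemma Aalt_zero_of_lt : ∀ (k : ℕ) (w : List α), w.length < k → Aalt g k w = 0
  | 0, _, h => absurd h (Nat.not_lt_zero _)
  | k+1, w, h => by
      rw [Aalt_succ_def]
      apply Finset.sum_eq_zero
      intro j hj
      rw [Finset.mem_range] at hj
      rw [Aalt_zero_of_lt k (w.drop (j+1)) (by rw [List.length_drop]; omega), mul_zero]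

lemma cnv_peel (hg : g [] = 1) (f : List α → ℝ) (w : List α) :
    cnv g f w = f w + ∑ j ∈ Finset.range w.length, g (w.take (j+1)) * f (w.drop (j+1)) := by
  rw [cnv, Finset.sum_range_succ' (fun k => g (w.take k) * f (w.drop k)) w.length]
  rw [List.take_zero, List.drop_zero, hg, one_mul, add_comm]

lemma Aalt_ext_range {N : ℕ} (w : List α) (hw : w.length ≤ N) (c : ℕ → ℝ) :
    ∑ k ∈ Finset.range (N+1), c k * Aalt g k w
      = ∑ k ∈ Finset.range (w.length+1), c k * Aalt g k w := by
  symm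
  apply Finset.sum_subset (Finset.range_subset_range.2 (by omega))
  intro k hk hnk
  rw [Finset.mem_range] at hk
  rw [Finset.mem_range, not_lt] at hnk
  rw [Aalt_zero_of_lt k w (by omega), mul_zero]

lemma binom_formula (hg : g [] = 1) (s : ℕ → List α → ℝ) (hs0 : ∀ w, s 0 w = g w)
    (hsrec : ∀ m w, s (m+1) w = cnv g (s m) w) :
    ∀ (m : ℕ) (w : List α), s m w
      = ∑ k ∈ Finset.range (w.length+1), ((m+1).choose k : ℝ) * Aalt g k w := by
  intro m
  induction m with
  | zero =>
    intro w
    by_cases hw : w = []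
    · subst hw
      simp [hs0, hg, Aalt_zero_def, Finset.sum_range_one]
    · have hlen : 0 < w.length := List.length_pos_iff.2 hw
      rw [hs0]
      rw [Finset.sum_eq_single_of_mem 1 (Finset.mem_range.2 (by omega))]
      · rw [Nat.choose_self, Nat.cast_one, one_mul, Aalt_succ_def]
        rw [Finset.sum_eq_single_of_mem (w.length - 1) (Finset.mem_range.2 (by omega))]
        · rw [show w.length - 1 + 1 = w.length from by omega, List.take_length,
            List.drop_length, Aalt_zero_def, if_pos rfl, mul_one]
        · intro j hj hjne
          rw [Finset.mem_range] at hj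
          rw [Aalt_zero_def, if_neg (by rw [List.drop_eq_nil_iff]; omega), mul_zero]
      · intro k hk hkne
        rw [Finset.mem_range] at hk
        match k, hk, hkne with
        | 0, _, _ => rw [Aalt_zero_def, if_neg hw, mul_zero]
        | (j+2), _, _ =>
          rw [show Nat.choose 1 (j+2) = 0 from Nat.choose_eq_zero_of_lt (by omega),
            Nat.cast_zero, zero_mul]
  | succ m ih =>
    intro w
    rw [hsrec m w, cnv_peel hg]
    have hinner : ∀ j ∈ Finset.range w.length,
        g (w.take (j+1)) * s m (w.drop (j+1))
          = g (w.take (j+1)) * ∑ k ∈ Finset.range (w.length+1),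
              ((m+1).choose k : ℝ) * Aalt g k (w.drop (j+1)) := by
      intro j hj
      rw [Finset.mem_range] at hj
      rw [ih (w.drop (j+1))]
      congr 1
      exact (Aalt_ext_range (w.drop (j+1)) (by rw [List.length_drop]; omega) _).symm
    rw [ih w, Finset.sum_congr rfl hinner]
    have hswap : ∑ j ∈ Finset.range w.length,
        g (w.take (j+1)) * ∑ k ∈ Finset.range (w.length+1),
          ((m+1).choose k : ℝ) * Aalt g k (w.drop (j+1))
        = ∑ k ∈ Finset.range (w.length+1), ((m+1).choose k : ℝ) * Aalt g (k+1) w := by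
      have h1 : ∀ j ∈ Finset.range w.length,
          g (w.take (j+1)) * ∑ k ∈ Finset.range (w.length+1),
            ((m+1).choose k : ℝ) * Aalt g k (w.drop (j+1))
          = ∑ k ∈ Finset.range (w.length+1),
              g (w.take (j+1)) * (((m+1).choose k : ℝ) * Aalt g k (w.drop (j+1))) :=
        fun j _ => by rw [Finset.mul_sum]
      rw [Finset.sum_congr rfl h1, Finset.sum_comm]
      apply Finset.sum_congr rfl
      intro k _
      rw [Aalt_succ_def, Finset.mul_sum]
      apply Finset.sum_congr rfl
      intro j _
      ring
    rw [hswap]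
    have hB : ∑ k ∈ Finset.range (w.length+1), ((m+1).choose k : ℝ) * Aalt g (k+1) w
        = ∑ j ∈ Finset.range w.length, ((m+1).choose j : ℝ) * Aalt g (j+1) w := by
      rw [Finset.sum_range_succ]
      rw [Aalt_zero_of_lt (w.length+1) w (by omega), mul_zero, add_zero]
    rw [hB]
    rw [Finset.sum_range_succ' (fun k => (((m+1)+1).choose k : ℝ) * Aalt g k w) w.length,
      Finset.sum_range_succ' (fun k => ((m+1).choose k : ℝ) * Aalt g k w) w.length]
    simp only [Nat.choose_succ_succ' (m+1), Nat.choose_zero_right, Nat.cast_one, one_mul,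
      Nat.cast_add, add_mul]
    rw [Finset.sum_add_distrib]
    ring

lemma cnv_nil (f : List α → ℝ) (hg : g [] = 1) : cnv g f [] = f [] := by
  rw [cnv]
  simp [hg]

/-- The candidate inverse `Σ_k (-1)^k A_k`. -/
noncomputable def hinvF (g : List α → ℝ) (w : List α) : ℝ :=
  ∑ k ∈ Finset.range (w.length+1), (-1:ℝ)^k * Aalt g k w

lemma cnv_hinvF (hg : g [] = 1) (w : List α) : cnv g (hinvF g) w = deltaF w := by
  rw [cnv_peel hg]
  have hinner : ∀ j ∈ Finset.range w.length,
      g (w.take (j+1)) * hinvF g (w.drop (j+1))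
        = g (w.take (j+1)) * ∑ k ∈ Finset.range (w.length+1),
            (-1:ℝ)^k * Aalt g k (w.drop (j+1)) := by
    intro j hj
    rw [Finset.mem_range] at hj
    rw [hinvF]
    congr 1
    exact (Aalt_ext_range (w.drop (j+1)) (by rw [List.length_drop]; omega) _).symm
  rw [Finset.sum_congr rfl hinner]
  have hswap : ∑ j ∈ Finset.range w.length,
      g (w.take (j+1)) * ∑ k ∈ Finset.range (w.length+1),
        (-1:ℝ)^k * Aalt g k (w.drop (j+1))
      = ∑ k ∈ Finset.range (w.length+1), (-1:ℝ)^k * Aalt g (k+1) w := by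
    have h1 : ∀ j ∈ Finset.range w.length,
        g (w.take (j+1)) * ∑ k ∈ Finset.range (w.length+1),
          (-1:ℝ)^k * Aalt g k (w.drop (j+1))
        = ∑ k ∈ Finset.range (w.length+1),
            g (w.take (j+1)) * ((-1:ℝ)^k * Aalt g k (w.drop (j+1))) :=
      fun j _ => Finset.mul_sum _ _ _
    rw [Finset.sum_congr rfl h1, Finset.sum_comm]
    apply Finset.sum_congr rfl
    intro k _
    rw [Aalt_succ_def, Finset.mul_sum]
    apply Finset.sum_congr rfl
    intro j _
    ring
  rw [hswap]
  have hB : ∑ k ∈ Finset.range (w.length+1), (-1:ℝ)^k * Aalt g (k+1) w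
      = ∑ j ∈ Finset.range w.length, (-1:ℝ)^j * Aalt g (j+1) w := by
    rw [Finset.sum_range_succ]
    rw [Aalt_zero_of_lt (w.length+1) w (by omega), mul_zero, add_zero]
  rw [hB, hinvF]
  rw [Finset.sum_range_succ' (fun k => (-1:ℝ)^k * Aalt g k w) w.length]
  simp only [pow_succ, pow_zero, one_mul, deltaF, Aalt_zero_def]
  have hz : ∑ j ∈ Finset.range w.length, ((-1:ℝ)^j * (-1) * Aalt g (j+1) w)
      + ∑ j ∈ Finset.range w.length, (-1:ℝ)^j * Aalt g (j+1) w = 0 := by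
    rw [← Finset.sum_add_distrib]
    apply Finset.sum_eq_zero
    intro j _
    ring
  linarith [hz]

lemma cnv_right_unique (hg : g [] = 1) {u u' : List α → ℝ}
    (h : ∀ w, cnv g u w = deltaF w) (h' : ∀ w, cnv g u' w = deltaF w) :
    ∀ w, u w = u' w := by
  have H : ∀ (N : ℕ) (w : List α), w.length ≤ N → u w = u' w := by
    intro N
    induction N with
    | zero =>
      intro w hw
      have hwnil : w = [] := List.length_eq_zero_iff.1 (Nat.le_zero.1 hw)
      subst hwnil
      have h1 := h []
      have h2 := h' []
      rw [cnv_nil u hg] at h1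
      rw [cnv_nil u' hg] at h2
      rw [h1, h2]
    | succ N ih =>
      intro w hw
      have hu := h w
      have hu' := h' w
      rw [cnv_peel hg] at hu hu'
      have hsame : ∀ j ∈ Finset.range w.length,
          g (w.take (j+1)) * u (w.drop (j+1)) = g (w.take (j+1)) * u' (w.drop (j+1)) := by
        intro j hj
        rw [Finset.mem_range] at hj
        rw [ih (w.drop (j+1)) (by rw [List.length_drop]; omega)]
      rw [Finset.sum_congr rfl hsame] at hu
      linarith
  exact fun w => H w.length w le_rfl

lemma descPoch_eval_neg_one : ∀ k : ℕ, (descPochhammer ℝ k).eval (-1 : ℝ)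
    = (-1:ℝ)^k * (k.factorial : ℝ)
  | 0 => by simp
  | k+1 => by
      rw [descPochhammer_succ_eval, descPoch_eval_neg_one k]
      push_cast [Nat.factorial_succ]
      ring

end Convolution
/-- A path variety closed under concatenation is closed under time
reversal: every algebraic subsemigroup of paths is an algebraic subgroup. -/
theorem statement19 {d : ℕ} (W : Set (TA (Fin d)))
    (hconc : ∀ X Y : RawPath (Fin d), X ∈ V W → Y ∈ V W → concat X Y ∈ V W) :
    ∀ X ∈ V W, timeRev X ∈ V W := by
  intro X hX
  have hXP : IsPath X := hX.1
  have PX : Pieces X.toFun X.T := pathPieces hXP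
  refine ⟨isPath_timeRev hXP, ?_⟩
  intro x hx
  set g : Word (Fin d) → ℝ := sig X with hgdef
  have hg1 : g [] = 1 := rfl
  -- left-iterated concatenations
  let Pp : ℕ → RawPath (Fin d) := fun m => Nat.rec X (fun _ Z => concat X Z) m
  have hPpV : ∀ m, Pp m ∈ V W := by
    intro m
    induction m with
    | zero => exact hX
    | succ m ih => exact hconc X (Pp m) hX ih
  have hchen : ∀ (m : ℕ) (w : Word (Fin d)),
      sig (Pp (m+1)) w = cnv g (fun v => sig (Pp m) v) w := by
    intro m w
    have PY : Pieces (Pp m).toFun (Pp m).T := pathPieces (hPpV m).1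
    have PZ : Pieces (concat X (Pp m)).toFun (X.T + (Pp m).T) := pathPieces (hPpV (m+1)).1
    exact sig_concat PX PY PZ w
  -- time reversal formula
  have hB : ∀ w : Word (Fin d), sig (timeRev X) w = (-1:ℝ)^w.length * g w.reverse := by
    intro w
    have h1 : sig (timeRev X) w
        = sigRev (fun u j => X.toFun (X.T - u) j) w.reverse X.T := rfl
    rw [h1, sigRev_timeRev PX w.reverse X.T (right_mem_Icc.2 PX.T_nonneg), sub_self,
      sigK_zero_eq PX, List.length_reverse]
    rw [hgdef, sig_rfl X w.reverse, List.reverse_reverse]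
  -- convolution of g with the reversed signature is the counit
  have hanti : ∀ w : Word (Fin d), cnv g (fun v => sig (timeRev X) v) w = deltaF w := by
    intro w
    by_cases hw : w = []
    · subst hw
      rw [cnv_nil _ hg1]
      show sig (timeRev X) [] = deltaF []
      rw [show sig (timeRev X) ([] : Word (Fin d)) = 1 from rfl]
      simp [deltaF]
    · have h := antipode_sum_zero PX w hw
      rw [cnv, deltaF]
      rw [if_neg hw]
      have hterm : ∀ k ∈ Finset.range (w.length+1),
          g (w.take k) * (fun v => sig (timeRev X) v) (w.drop k)
            = (-1:ℝ)^(w.length - k) *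
              (sigRev X.toFun ((w.take k).reverse) X.T * sigRev X.toFun (w.drop k) X.T) := by
        intro k hk
        rw [Finset.mem_range, Nat.lt_succ_iff] at hk
        show g (w.take k) * sig (timeRev X) (w.drop k) = _
        rw [hB (w.drop k), List.length_drop, hgdef, sig_rfl X ((w.drop k).reverse),
          List.reverse_reverse, sig_rfl X (w.take k)]
        ring
      rw [Finset.sum_congr rfl hterm, h]
  -- the reversed signature is the explicit convolution inverse
  have huniq : ∀ v, sig (timeRev X) v = hinvF g v :=
    cnv_right_unique hg1 hanti (fun w => cnv_hinvF hg1 w)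
  -- binomial formula for iterated concatenation
  have hbinom := binom_formula hg1 (fun m v => sig (Pp m) v) (fun _ => rfl) hchen
  set N : ℕ := x.support.sup List.length with hN
  set b : ℕ → ℝ := fun k => ∑ w ∈ x.support, x w * Aalt g k w with hb
  have hlenN : ∀ w ∈ x.support, w.length ≤ N := fun w hw => Finset.le_sup (f := List.length) hw
  have hpm : ∀ m : ℕ, ∑ k ∈ Finset.range (N+1), (((m+1).choose k : ℕ) : ℝ) * b k = 0 := by
    intro m
    have h0 : pair (Pp m) x = 0 := (hPpV m).2 x hx
    rw [pair_eq] at h0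
    rw [← h0]
    calc ∑ k ∈ Finset.range (N+1), (((m+1).choose k : ℕ) : ℝ) * b k
        = ∑ k ∈ Finset.range (N+1), ∑ w ∈ x.support,
            x w * ((((m+1).choose k : ℕ) : ℝ) * Aalt g k w) := by
          apply Finset.sum_congr rfl
          intro k _
          rw [hb, Finset.mul_sum]
          apply Finset.sum_congr rfl
          intro w _
          ring
      _ = ∑ w ∈ x.support, ∑ k ∈ Finset.range (N+1),
            x w * ((((m+1).choose k : ℕ) : ℝ) * Aalt g k w) := Finset.sum_comm
      _ = ∑ w ∈ x.support, x w * sig (Pp m) w := by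
          apply Finset.sum_congr rfl
          intro w hw
          rw [← Finset.mul_sum]
          congr 1
          rw [Aalt_ext_range w (hlenN w hw) _]
          exact (hbinom m w).symm
  have hrev : pair (timeRev X) x = ∑ k ∈ Finset.range (N+1), (-1:ℝ)^k * b k := by
    rw [pair_eq]
    calc ∑ w ∈ x.support, x w * sig (timeRev X) w
        = ∑ w ∈ x.support, ∑ k ∈ Finset.range (N+1),
            x w * ((-1:ℝ)^k * Aalt g k w) := by
          apply Finset.sum_congr rfl
          intro w hw
          rw [huniq w, hinvF, ← Finset.mul_sum]
          congr 1
          exact (Aalt_ext_range w (hlenN w hw) _).symm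
      _ = ∑ k ∈ Finset.range (N+1), ∑ w ∈ x.support,
            x w * ((-1:ℝ)^k * Aalt g k w) := Finset.sum_comm
      _ = ∑ k ∈ Finset.range (N+1), (-1:ℝ)^k * b k := by
          apply Finset.sum_congr rfl
          intro k _
          rw [hb, Finset.mul_sum]
          apply Finset.sum_congr rfl
          intro w _
          ring
  set Q : Polynomial ℝ := ∑ k ∈ Finset.range (N+1),
    Polynomial.C (b k / (k.factorial : ℝ)) * descPochhammer ℝ k with hQ
  have hQeval : ∀ m : ℕ, Q.eval ((m:ℝ) + 1) = 0 := by
    intro m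
    rw [hQ, Polynomial.eval_finset_sum]
    rw [show ((m:ℝ) + 1) = ((m + 1 : ℕ) : ℝ) by push_cast; ring]
    have hterm : ∀ k ∈ Finset.range (N+1),
        (Polynomial.C (b k / (k.factorial : ℝ)) * descPochhammer ℝ k).eval ((m+1 : ℕ) : ℝ)
          = (((m+1).choose k : ℕ) : ℝ) * b k := by
      intro k _
      rw [Polynomial.eval_mul, Polynomial.eval_C,
        descPochhammer_eval_eq_descFactorial ℝ (m+1) k,
        Nat.descFactorial_eq_factorial_mul_choose]
      have hkf : (k.factorial : ℝ) ≠ 0 := Nat.cast_ne_zero.2 k.factorial_ne_zero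
      push_cast
      field_simp
    rw [Finset.sum_congr rfl hterm]
    exact hpm m
  have hQzero : Q = 0 := by
    apply Polynomial.eq_zero_of_infinite_isRoot
    apply Set.infinite_of_injective_forall_mem (f := fun m : ℕ => (m:ℝ) + 1)
    · intro a c hac
      simp only at hac
      have : (a:ℝ) = (c:ℝ) := by linarith
      exact_mod_cast this
    · intro m
      exact hQeval m
  have hfinal : Q.eval (-1:ℝ) = pair (timeRev X) x := by
    rw [hrev, hQ, Polynomial.eval_finset_sum]
    apply Finset.sum_congr rfl
    intro k _
    rw [Polynomial.eval_mul, Polynomial.eval_C, descPoch_eval_neg_one k]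
    have hkf : (k.factorial : ℝ) ≠ 0 := Nat.cast_ne_zero.2 k.factorial_ne_zero
    field_simp
  rw [← hfinal, hQzero, Polynomial.eval_zero]

end PathVarieties
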